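/- arXiv:2011.02085 — 2 statements merged into one kernel-verified Lean document; each statement's English description precedes it below -/
import Mathlib

section
/- Let K be an algebraically closed field, E a finite dimensional local K-algebra, and A a finite dimensional local K-algebra. Then the tensor product E ⊗_K A is a local ring. -/
open TensorProduct

section NoncommLocal

variable {K : Type} [Field K] {R : Type} [Ring R] [Algebra K R]

theorem myIsUnit_or_of_isUnit_add [IsLocalRing R] {a b : R} (h : IsUnit (a + b)) :
    IsUnit a ∨ IsUnit b := by
  rcases h with ⟨u, hu⟩
  have h1 : (↑u⁻¹ : R) * a + (↑u⁻¹ : R) * b = 1 := by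
    rw [← mul_add, ← hu, Units.inv_mul]
  rcases IsLocalRing.isUnit_or_isUnit_of_add_one h1 with h | h
  · left
    have := (Units.isUnit u).mul h
    rwa [← mul_assoc, Units.mul_inv, one_mul] at this
  · right
    have := (Units.isUnit u).mul h
    rwa [← mul_assoc, Units.mul_inv, one_mul] at this

/-- In a local ring, a left-invertible element is a unit. -/
theorem myIsUnit_of_mul_eq_one_left [IsLocalRing R] {m n : R} (h : m * n = 1) : IsUnit n := by
  have h2 : IsUnit (n * m) ∨ IsUnit (1 - n * m) := by
    apply myIsUnit_or_of_isUnit_add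
    simpa using isUnit_one
  rcases h2 with h2 | h2
  · rcases h2 with ⟨v, hv⟩
    have hr : n * (m * (↑v⁻¹ : R)) = 1 := by
      rw [← mul_assoc, ← hv, Units.mul_inv]
    have hm : m * (↑v⁻¹ : R) = m := by
      calc m * (↑v⁻¹ : R) = (m * n) * (m * (↑v⁻¹ : R)) := by rw [h, one_mul]
        _ = m * (n * (m * (↑v⁻¹ : R))) := by rw [mul_assoc]
        _ = m := by rw [hr, mul_one]
    rw [hm] at hr
    exact ⟨⟨n, m, hr, h⟩, rfl⟩
  · exfalso
    rcases h2 with ⟨w, hw⟩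
    have hzero : (1 - n * m) * n = 0 := by
      rw [sub_mul, one_mul, mul_assoc, h, mul_one, sub_self]
    have hn0 : n = 0 := by
      have : (↑w⁻¹ : R) * ((1 - n * m) * n) = (↑w⁻¹ : R) * 0 := by rw [hzero]
      rwa [← mul_assoc, ← hw, Units.inv_mul, one_mul, mul_zero] at this
    rw [hn0, mul_zero] at h
    exact zero_ne_one h

/-- In a local ring, a right-invertible element is a unit. -/
theorem myIsUnit_of_mul_eq_one_right [IsLocalRing R] {m n : R} (h : n * m = 1) : IsUnit n := by
  have hm : IsUnit m := myIsUnit_of_mul_eq_one_left h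
  rcases hm with ⟨u, hu⟩
  have : n = (↑u⁻¹ : R) := by
    calc n = n * (↑u * ↑u⁻¹) := by rw [Units.mul_inv, mul_one]
      _ = (n * ↑u) * ↑u⁻¹ := by rw [mul_assoc]
      _ = ↑u⁻¹ := by rw [← hu] at h; rw [h, one_mul]
  rw [this]
  exact Units.isUnit _

variable (K R) in
/-- The nonunits of a (possibly noncommutative) local `K`-algebra, as a `K`-submodule. -/
def nonunitsSub [IsLocalRing R] : Submodule K R where
  carrier := {x | ¬ IsUnit x}
  zero_mem' := by simpa using not_isUnit_zero
  add_mem' := fun {a b} ha hb h => (myIsUnit_or_of_isUnit_add h).elim ha hb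
  smul_mem' := by
    intro c x hx h
    rcases eq_or_ne c 0 with rfl | hc
    · rw [zero_smul] at h
      exact not_isUnit_zero h
    · apply hx
      have h1 : x = c⁻¹ • (c • x) := by rw [smul_smul, inv_mul_cancel₀ hc, one_smul]
      rw [h1, Algebra.smul_def]
      exact (((isUnit_iff_ne_zero).2 (inv_ne_zero hc)).map (algebraMap K R)).mul h

theorem mem_nonunitsSub [IsLocalRing R] {x : R} : x ∈ nonunitsSub K R ↔ ¬ IsUnit x := Iff.rfl

theorem nonunitsSub_mul_left [IsLocalRing R] {x : R} (hx : x ∈ nonunitsSub K R) (r : R) :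
    r * x ∈ nonunitsSub K R := by
  intro h
  rcases h with ⟨u, hu⟩
  exact hx (myIsUnit_of_mul_eq_one_left (show ((↑u⁻¹ : R) * r) * x = 1 by
    rw [mul_assoc, ← hu, Units.inv_mul]))

theorem nonunitsSub_mul_right [IsLocalRing R] {x : R} (hx : x ∈ nonunitsSub K R) (r : R) :
    x * r ∈ nonunitsSub K R := by
  intro h
  rcases h with ⟨u, hu⟩
  exact hx (myIsUnit_of_mul_eq_one_right (show x * (r * (↑u⁻¹ : R)) = 1 by
    rw [← mul_assoc, ← hu, Units.mul_inv]))

/-- Over an algebraically closed field, every element of a finite dimensional algebra is a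
scalar plus a nonunit. -/
theorem exists_scalar_sub_mem [IsAlgClosed K] [FiniteDimensional K R] [IsLocalRing R] (x : R) :
    ∃ c : K, x - algebraMap K R c ∈ nonunitsSub K R := by
  have hint : IsIntegral K x := IsIntegral.of_finite K x
  have hp0 : minpoly K x ≠ 0 := minpoly.ne_zero hint
  have hdeg : 0 < (minpoly K x).degree := minpoly.degree_pos hint
  obtain ⟨c, hc⟩ := IsAlgClosed.exists_root (minpoly K x) (by
    intro h
    rw [h] at hdeg
    exact lt_irrefl _ hdeg)
  have hdvd : (Polynomial.X - Polynomial.C c) ∣ minpoly K x := Polynomial.dvd_iff_isRoot.2 hc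
  obtain ⟨q, hq⟩ := hdvd
  refine ⟨c, fun hunit => ?_⟩
  have h0 : (x - algebraMap K R c) * Polynomial.aeval x q = 0 := by
    have h1 := minpoly.aeval K x
    rw [hq, map_mul, map_sub, Polynomial.aeval_X, Polynomial.aeval_C] at h1
    exact h1
  rcases hunit with ⟨u, hu⟩
  have hq0 : Polynomial.aeval x q = 0 := by
    have h2 : (↑u⁻¹ : R) * ((x - algebraMap K R c) * Polynomial.aeval x q) = 0 := by
      rw [h0, mul_zero]
    rwa [← mul_assoc, ← hu, Units.inv_mul, one_mul] at h2
  have hqne : q ≠ 0 := fun h => hp0 (by rw [hq, h, mul_zero])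
  have hle := minpoly.degree_le_of_ne_zero K x hqne hq0
  have hdq : (minpoly K x).degree = 1 + q.degree := by
    rw [hq, Polynomial.degree_mul, Polynomial.degree_X_sub_C]
  rw [hdq] at hle
  have : q.degree ≠ ⊥ := Polynomial.degree_ne_bot.2 hqne
  rcases Polynomial.degree_eq_natDegree hqne with h
  rw [h] at hle
  norm_cast at hle
  omega

section Nakayama

variable [IsLocalRing R]

theorem mem_nonunits_mul_span_finset {N : Submodule K R} {s : Finset R} {x : R}
    (hx : x ∈ N * Submodule.span K (s : Set R)) :
    ∃ a : R → R, (∀ w, a w ∈ N) ∧ x = ∑ w ∈ s, a w * w := by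
  refine Submodule.mul_induction_on hx ?_ ?_
  · intro m hm n hn
    obtain ⟨f, -, hf⟩ := Submodule.mem_span_finset.1 hn
    refine ⟨fun w => f w • m, fun w => N.smul_mem _ hm, ?_⟩
    rw [← hf, Finset.mul_sum]
    refine Finset.sum_congr rfl fun i _ => ?_
    rw [mul_smul_comm, smul_mul_assoc]
  · rintro x y ⟨a, ha, rfl⟩ ⟨b, hb, rfl⟩
    refine ⟨fun w => a w + b w, fun w => N.add_mem (ha w) (hb w), ?_⟩
    rw [← Finset.sum_add_distrib]
    refine Finset.sum_congr rfl fun i _ => ?_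
    rw [add_mul]

theorem span_eq_bot_of_le_nonunits_mul (s : Finset R)
    (h : Submodule.span K (s : Set R) ≤ nonunitsSub K R * Submodule.span K (s : Set R)) :
    Submodule.span K (s : Set R) = ⊥ := by
  classical
  induction s using Finset.induction_on with
  | empty => simp
  | @insert v t hvt ih =>
    set N := nonunitsSub K R with hN
    have hvmem : v ∈ N * Submodule.span K ((insert v t : Finset R) : Set R) :=
      h (Submodule.subset_span (by simp))
    obtain ⟨a, ha, hrep⟩ := mem_nonunits_mul_span_finset hvmem
    rw [Finset.sum_insert hvt] at hrep
    have h1 : (1 - a v) * v = ∑ w ∈ t, a w * w := by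
      rw [sub_mul, one_mul]
      nth_rewrite 1 [hrep]
      abel
    have hu : IsUnit (1 - a v) := by
      by_contra hnu
      have hone : (1 : R) ∈ N := by
        have := N.add_mem (ha v) (hnu : (1 - a v) ∈ N)
        rwa [add_sub_cancel] at this
      exact hone isUnit_one
    rcases hu with ⟨u, hu⟩
    have hv2 : v ∈ N * Submodule.span K (t : Set R) := by
      have hveq : v = ∑ w ∈ t, ((↑u⁻¹ : R) * a w) * w := by
        calc v = (↑u⁻¹ : R) * ((1 - a v) * v) := by
              rw [← hu, ← mul_assoc, Units.inv_mul, one_mul]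
          _ = ∑ w ∈ t, ((↑u⁻¹ : R) * a w) * w := by
              rw [h1, Finset.mul_sum]
              exact Finset.sum_congr rfl fun i _ => by rw [mul_assoc]
      rw [hveq]
      exact Submodule.sum_mem _ fun w hw =>
        Submodule.mul_mem_mul (nonunitsSub_mul_left (ha w) _) (Submodule.subset_span hw)
    have hsub : N * Submodule.span K ((insert v t : Finset R) : Set R)
        ≤ N * Submodule.span K (t : Set R) := by
      rw [Finset.coe_insert, Submodule.span_insert, Submodule.mul_sup]
      refine sup_le ?_ le_rfl
      have hsv : Submodule.span K ({v} : Set R) ≤ N * Submodule.span K (t : Set R) :=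
        (Submodule.span_le).2 (by simpa using hv2)
      calc N * Submodule.span K ({v} : Set R) ≤ N * (N * Submodule.span K (t : Set R)) :=
            mul_le_mul' le_rfl hsv
        _ = (N * N) * Submodule.span K (t : Set R) := by rw [mul_assoc]
        _ ≤ N * Submodule.span K (t : Set R) := by
            refine mul_le_mul_left ?_ _
            exact Submodule.mul_le.2 fun m hm n hn => nonunitsSub_mul_left hn m
    have ht : Submodule.span K (t : Set R) ≤ N * Submodule.span K (t : Set R) := by
      intro w hw
      refine hsub (h ?_)
      exact Submodule.span_mono (by simp) hw
    have htbot := ih ht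
    have hv0 : v = 0 := by
      have := hv2
      rw [htbot, Submodule.mul_bot] at this
      simpa using this
    rw [Finset.coe_insert, hv0, Submodule.span_insert, htbot]
    simp

theorem exists_pow_nonunits_eq_bot [FiniteDimensional K R] :
    ∃ m, 0 < m ∧ (nonunitsSub K R) ^ m = ⊥ := by
  set N := nonunitsSub K R with hN
  have hNN : N * N ≤ N := Submodule.mul_le.2 fun m hm n hn => nonunitsSub_mul_left hn m
  have hdec : ∀ k, N ^ (k + 2) ≤ N ^ (k + 1) := by
    intro k
    induction k with
    | zero =>
      rw [pow_succ, pow_one]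
      exact hNN
    | succ k ih =>
      rw [pow_succ N (k + 2), pow_succ N (k + 1)]
      exact mul_le_mul_left ih _
  have key : ∃ k, Module.finrank K (N ^ (k + 2) : Submodule K R)
      = Module.finrank K (N ^ (k + 1) : Submodule K R) := by
    by_contra hc
    push_neg at hc
    have hlt : ∀ k, Module.finrank K (N ^ (k + 2) : Submodule K R)
        < Module.finrank K (N ^ (k + 1) : Submodule K R) := fun k =>
      lt_of_le_of_ne (Submodule.finrank_mono (hdec k)) (hc k)
    have hbd : ∀ k, Module.finrank K (N ^ (k + 1) : Submodule K R) + k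
        ≤ Module.finrank K (N ^ 1 : Submodule K R) := by
      intro k
      induction k with
      | zero => simp
      | succ k ih =>
        have h2 := hlt k
        rw [show k + 1 + 1 = k + 2 from rfl]
        omega
    have := hbd (Module.finrank K (N ^ 1 : Submodule K R) + 1)
    omega
  obtain ⟨k, hk⟩ := key
  have heq : N ^ (k + 2) = N ^ (k + 1) := Submodule.eq_of_le_of_finrank_eq (hdec k) hk
  obtain ⟨s, hs⟩ : (N ^ (k + 1)).FG := IsNoetherian.noetherian _
  refine ⟨k + 1, Nat.succ_pos _, ?_⟩
  rw [← hs]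
  apply span_eq_bot_of_le_nonunits_mul
  have : N * Submodule.span K (s : Set R) = Submodule.span K (s : Set R) := by
    rw [hs, ← pow_succ']
    rw [show k + 1 + 1 = k + 2 from rfl]
    exact heq
  rw [this]

end Nakayama

end NoncommLocal

/-- If `K` is an algebraically closed field and `E`, `A` are finite dimensional local
`K`-algebras, then `E ⊗[K] A` is a local ring. -/
theorem tensor_of_local_isLocalRing
    (K E A : Type) [Field K] [IsAlgClosed K]
    [Ring E] [Algebra K E] [FiniteDimensional K E] [IsLocalRing E]
    [Ring A] [Algebra K A] [FiniteDimensional K A] [IsLocalRing A] :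
    IsLocalRing (E ⊗[K] A) := by
  classical
  set T := E ⊗[K] A with hT
  haveI : Nontrivial T := by
    apply Module.nontrivial_of_finrank_pos (R := K)
    rw [Module.finrank_tensorProduct]
    exact Nat.mul_pos Module.finrank_pos Module.finrank_pos
  set NE := nonunitsSub K E with hNE
  set NA := nonunitsSub K A with hNA
  obtain ⟨mE, hmE0, hmE⟩ := exists_pow_nonunits_eq_bot (K := K) (R := E)
  obtain ⟨mA, hmA0, hmA⟩ := exists_pow_nonunits_eq_bot (K := K) (R := A)
  -- the filtration pieces
  set Np : ℕ → Submodule K E := fun i => if i = 0 then ⊤ else NE ^ i with hNp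
  set Nq : ℕ → Submodule K A := fun j => if j = 0 then ⊤ else NA ^ j with hNq
  have hNp0 : Np 0 = ⊤ := by simp [hNp]
  have hNq0 : Nq 0 = ⊤ := by simp [hNq]
  have hNpPow : ∀ i, i ≠ 0 → Np i = NE ^ i := fun i hi => by simp [hNp, hi]
  have hNqPow : ∀ j, j ≠ 0 → Nq j = NA ^ j := fun j hj => by simp [hNq, hj]
  -- absorption of powers
  have habsL : ∀ (R' : Type) [inst : Ring R'] [inst2 : Algebra K R'] [inst3 : IsLocalRing R'],
      ∀ (j : ℕ) (x : R'), ∀ n ∈ (nonunitsSub K R') ^ (j + 1),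
        x * n ∈ (nonunitsSub K R') ^ (j + 1) := by
    intro R' _ _ _ j x n hn
    rw [pow_succ'] at hn ⊢
    refine Submodule.mul_induction_on hn (fun a ha b hb => ?_) (fun p q hp hq => ?_)
    · rw [← mul_assoc]
      exact Submodule.mul_mem_mul (nonunitsSub_mul_left ha x) hb
    · rw [mul_add]
      exact Submodule.add_mem _ hp hq
  have habsR : ∀ (R' : Type) [inst : Ring R'] [inst2 : Algebra K R'] [inst3 : IsLocalRing R'],
      ∀ (j : ℕ) (x : R'), ∀ n ∈ (nonunitsSub K R') ^ (j + 1),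
        n * x ∈ (nonunitsSub K R') ^ (j + 1) := by
    intro R' _ _ _ j x n hn
    rw [pow_succ] at hn ⊢
    refine Submodule.mul_induction_on hn (fun a ha b hb => ?_) (fun p q hp hq => ?_)
    · rw [mul_assoc]
      exact Submodule.mul_mem_mul ha (nonunitsSub_mul_right hb x)
    · rw [add_mul]
      exact Submodule.add_mem _ hp hq
  have habsE : ∀ i j, ∀ u ∈ Np i, ∀ u' ∈ Np j, u * u' ∈ Np (i + j) := by
    intro i j u hu u' hu'
    rcases Nat.eq_zero_or_pos i with rfl | hi
    · rcases Nat.eq_zero_or_pos j with rfl | hj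
      · rw [hNp0]; trivial
      · obtain ⟨j', rfl⟩ := Nat.exists_eq_succ_of_ne_zero hj.ne'
        rw [zero_add, hNpPow _ (Nat.succ_ne_zero _)]
        rw [hNpPow _ (Nat.succ_ne_zero _)] at hu'
        exact habsL E _ u u' hu'
    · rcases Nat.eq_zero_or_pos j with rfl | hj
      · obtain ⟨i', rfl⟩ := Nat.exists_eq_succ_of_ne_zero hi.ne'
        rw [add_zero, hNpPow _ (Nat.succ_ne_zero _)]
        rw [hNpPow _ (Nat.succ_ne_zero _)] at hu
        exact habsR E _ u' u hu
      · rw [hNpPow _ hi.ne'] at hu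
        rw [hNpPow _ hj.ne'] at hu'
        rw [hNpPow _ (by omega), pow_add]
        exact Submodule.mul_mem_mul hu hu'
  have habsA : ∀ i j, ∀ v ∈ Nq i, ∀ v' ∈ Nq j, v * v' ∈ Nq (i + j) := by
    intro i j v hv v' hv'
    rcases Nat.eq_zero_or_pos i with rfl | hi
    · rcases Nat.eq_zero_or_pos j with rfl | hj
      · rw [hNq0]; trivial
      · obtain ⟨j', rfl⟩ := Nat.exists_eq_succ_of_ne_zero hj.ne'
        rw [zero_add, hNqPow _ (Nat.succ_ne_zero _)]
        rw [hNqPow _ (Nat.succ_ne_zero _)] at hv'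
        exact habsL A _ v v' hv'
    · rcases Nat.eq_zero_or_pos j with rfl | hj
      · obtain ⟨i', rfl⟩ := Nat.exists_eq_succ_of_ne_zero hi.ne'
        rw [add_zero, hNqPow _ (Nat.succ_ne_zero _)]
        rw [hNqPow _ (Nat.succ_ne_zero _)] at hv
        exact habsR A _ v' v hv
      · rw [hNqPow _ hi.ne'] at hv
        rw [hNqPow _ hj.ne'] at hv'
        rw [hNqPow _ (by omega), pow_add]
        exact Submodule.mul_mem_mul hv hv'
  set U : ℕ → Submodule K T := fun k =>
    Submodule.span K {z : T | ∃ (i : ℕ) (j : ℕ) (u : E) (v : A),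
      i + j = k ∧ u ∈ Np i ∧ v ∈ Nq j ∧ z = u ⊗ₜ[K] v} with hU
  have hUmul : ∀ k l, U k * U l ≤ U (k + l) := by
    intro k l
    rw [hU, Submodule.span_mul_span]
    refine Submodule.span_le.2 ?_
    rintro z ⟨z1, hz1, z2, hz2, rfl⟩
    obtain ⟨i, j, u, v, hij, hu, hv, rfl⟩ := hz1
    obtain ⟨i', j', u', v', hij', hu', hv', rfl⟩ := hz2
    apply Submodule.subset_span
    refine ⟨i + i', j + j', u * u', v * v', by omega, habsE _ _ _ hu _ hu',
      habsA _ _ _ hv _ hv', ?_⟩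
    show (u ⊗ₜ[K] v) * (u' ⊗ₜ[K] v') = (u * u') ⊗ₜ[K] (v * v')
    rw [Algebra.TensorProduct.tmul_mul_tmul]
  have hUpow : ∀ k, U 1 ^ (k + 1) ≤ U (k + 1) := by
    intro k
    induction k with
    | zero => rw [pow_one]
    | succ k ih =>
      rw [pow_succ]
      calc U 1 ^ (k + 1) * U 1 ≤ U (k + 1) * U 1 := mul_le_mul_left ih _
        _ ≤ U (k + 1 + 1) := hUmul (k + 1) 1
  have hUbot : U (mE + mA) = ⊥ := by
    rw [hU, Submodule.span_eq_bot]
    rintro z ⟨i, j, u, v, hij, hu, hv, rfl⟩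
    have hcase : mE ≤ i ∨ mA ≤ j := by omega
    rcases hcase with hcase | hcase
    · have hu0 : u = 0 := by
        rw [hNpPow i (by omega)] at hu
        have hle : NE ^ i ≤ ⊥ := by
          have he : NE ^ i = NE ^ mE * NE ^ (i - mE) := by
            rw [← pow_add]
            congr 1
            omega
          rw [he, hmE, Submodule.bot_mul]
        simpa using hle hu
      rw [hu0, TensorProduct.zero_tmul]
    · have hv0 : v = 0 := by
        rw [hNqPow j (by omega)] at hv
        have hle : NA ^ j ≤ ⊥ := by
          have he : NA ^ j = NA ^ mA * NA ^ (j - mA) := by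
            rw [← pow_add]
            congr 1
            omega
          rw [he, hmA, Submodule.bot_mul]
        simpa using hle hv
      rw [hv0, TensorProduct.tmul_zero]
  have hnil : ∀ w ∈ U 1, IsNilpotent w := by
    intro w hw
    refine ⟨mE + mA, ?_⟩
    obtain ⟨M', hM'⟩ : ∃ M', mE + mA = M' + 1 := ⟨mE + mA - 1, by omega⟩
    have h1 : w ^ (mE + mA) ∈ U 1 ^ (mE + mA) := Submodule.pow_mem_pow _ hw _
    have h2 : U 1 ^ (mE + mA) ≤ U (mE + mA) := by
      rw [hM']
      exact hUpow M'
    have h3 := h2 h1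
    rw [hUbot] at h3
    simpa using h3
  have hcov : ∀ z : T, ∃ c : K, z - algebraMap K T c ∈ U 1 := by
    intro z
    induction z using TensorProduct.induction_on with
    | zero => exact ⟨0, by simp⟩
    | tmul x a =>
      obtain ⟨cE, hx⟩ := exists_scalar_sub_mem (K := K) x
      obtain ⟨cA, ha⟩ := exists_scalar_sub_mem (K := K) a
      refine ⟨cE * cA, ?_⟩
      have hmem1 : (x - algebraMap K E cE) ⊗ₜ[K] a ∈ U 1 := by
        apply Submodule.subset_span
        refine ⟨1, 0, x - algebraMap K E cE, a, rfl, ?_, ?_, rfl⟩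
        · rw [hNpPow 1 one_ne_zero, pow_one]
          exact hx
        · rw [hNq0]
          trivial
      have hmem2 : (1 : E) ⊗ₜ[K] (a - algebraMap K A cA) ∈ U 1 := by
        apply Submodule.subset_span
        refine ⟨0, 1, (1 : E), a - algebraMap K A cA, rfl, ?_, ?_, rfl⟩
        · rw [hNp0]
          trivial
        · rw [hNqPow 1 one_ne_zero, pow_one]
          exact ha
      have e1 : algebraMap K T (cE * cA)
          = (algebraMap K E cE) ⊗ₜ[K] (algebraMap K A cA) := by
        rw [map_mul, Algebra.TensorProduct.algebraMap_apply,
          Algebra.TensorProduct.algebraMap_apply', Algebra.TensorProduct.tmul_mul_tmul,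
          mul_one, one_mul]
      have e3 : cE • ((1 : E) ⊗ₜ[K] (a - algebraMap K A cA))
          = (algebraMap K E cE) ⊗ₜ[K] (a - algebraMap K A cA) := by
        rw [TensorProduct.smul_tmul', ← Algebra.algebraMap_eq_smul_one]
      have heq : x ⊗ₜ[K] a - algebraMap K T (cE * cA)
          = (x - algebraMap K E cE) ⊗ₜ[K] a
            + cE • ((1 : E) ⊗ₜ[K] (a - algebraMap K A cA)) := by
        rw [e1, e3, TensorProduct.sub_tmul, TensorProduct.tmul_sub]
        abel
      rw [heq]
      exact (U 1).add_mem hmem1 ((U 1).smul_mem cE hmem2)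
    | add z₁ z₂ ih₁ ih₂ =>
      obtain ⟨c₁, h₁⟩ := ih₁
      obtain ⟨c₂, h₂⟩ := ih₂
      refine ⟨c₁ + c₂, ?_⟩
      have heq : z₁ + z₂ - algebraMap K T (c₁ + c₂)
          = (z₁ - algebraMap K T c₁) + (z₂ - algebraMap K T c₂) := by
        rw [map_add]
        abel
      rw [heq]
      exact (U 1).add_mem h₁ h₂
  have key : ∀ c : K, c ≠ 0 → ∀ x : T, x - algebraMap K T c ∈ U 1 → IsUnit x := by
    intro c hc x hx
    have h1 : x = algebraMap K T c * (1 + c⁻¹ • (x - algebraMap K T c)) := by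
      rw [mul_add, mul_one, ← Algebra.smul_def, smul_smul, mul_inv_cancel₀ hc, one_smul,
        add_sub_cancel]
    rw [h1]
    exact ((isUnit_iff_ne_zero.2 hc).map (algebraMap K T)).mul
      ((hnil _ ((U 1).smul_mem _ hx)).isUnit_one_add)
  constructor
  intro a b hab
  obtain ⟨ca, ha⟩ := hcov a
  obtain ⟨cb, hb⟩ := hcov b
  have hsum : ca + cb = 1 := by
    have h2 : (a - algebraMap K T ca) + (b - algebraMap K T cb)
        = algebraMap K T (1 - (ca + cb)) := by
      rw [map_sub, map_add, map_one, ← hab]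
      abel
    have h3 : IsNilpotent (algebraMap K T (1 - (ca + cb))) := by
      refine hnil _ ?_
      rw [← h2]
      exact (U 1).add_mem ha hb
    obtain ⟨n, hn⟩ := h3
    rw [← map_pow] at hn
    have h4 : (1 - (ca + cb)) ^ n = 0 := by
      apply (algebraMap K T).injective
      rw [hn, map_zero]
    have h5 : (1 : K) - (ca + cb) = 0 := by
      rcases Nat.eq_zero_or_pos n with rfl | hn
      · simpa using h4
      · exact (pow_eq_zero_iff hn.ne').mp h4
    rw [sub_eq_zero] at h5
    exact h5.symm
  rcases eq_or_ne ca 0 with hca | hca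
  · right
    refine key cb ?_ b hb
    intro h
    rw [hca, h] at hsum
    norm_num at hsum
  · exact Or.inl (key ca hca a ha)
end

section
/- Let K be a field, Λ a finite dimensional K-algebra, and R a finite dimensional commutative K-algebra. If f : X → Y is a left 𝒴-approximation of X in K^b(proj Λ) for a full subcategory 𝒴 (i.e., every morphism X → Z with Z ∈ 𝒴 factors through f), then f ⊗_K R : X⊗_K R → Y⊗_K R is a left (𝒴⊗_K R)-approximation of X⊗_K R in K^b(proj(R⊗_K Λ)). -/
open TensorProduct CategoryTheory

attribute [local instance] RestrictScalars.moduleOrig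

section TensorMod
variable (K R Λ : Type) [Field K] [Ring R] [Algebra K R] [Ring Λ] [Algebra K Λ]
variable (M : Type) [AddCommGroup M] [Module Λ M]

/-- `R ⊗_K M`, where the `Λ`-module `M` is viewed as a `K`-module by restricting scalars. -/
abbrev TensorMod : Type := TensorProduct K R (RestrictScalars K Λ M)

/-- The action of `Λ` on the second factor of `R ⊗_K M`. -/
noncomputable def tensorModEndHom : Λ →+* Module.End K (TensorMod K R Λ M) where
  toFun a := (Module.toModuleEnd K (RestrictScalars K Λ M) a).lTensor R
  map_one' := by
    have h : Module.toModuleEnd K (RestrictScalars K Λ M) (1 : Λ) = LinearMap.id := by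
      ext x; simp
    rw [h, LinearMap.lTensor_id]; rfl
  map_mul' a b := by
    have h : Module.toModuleEnd K (RestrictScalars K Λ M) (a * b)
        = (Module.toModuleEnd K (RestrictScalars K Λ M) a) ∘ₗ
          (Module.toModuleEnd K (RestrictScalars K Λ M) b) := by
      ext x; simp [mul_smul]
    rw [h, LinearMap.lTensor_comp]; rfl
  map_zero' := by
    have h : Module.toModuleEnd K (RestrictScalars K Λ M) (0 : Λ) = 0 := by ext x; simp
    rw [h, LinearMap.lTensor_zero]
  map_add' a b := by
    have h : Module.toModuleEnd K (RestrictScalars K Λ M) (a + b)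
        = Module.toModuleEnd K (RestrictScalars K Λ M) a
          + Module.toModuleEnd K (RestrictScalars K Λ M) b := by
      ext x; simp [add_smul]
    rw [h, LinearMap.lTensor_add]

noncomputable instance tensorModModuleΛ : Module Λ (TensorMod K R Λ M) :=
  Module.compHom _ (tensorModEndHom K R Λ M)

lemma tensorMod_lambda_smul (a : Λ) (x : TensorMod K R Λ M) :
    a • x = (Module.toModuleEnd K (RestrictScalars K Λ M) a).lTensor R x := rfl

instance : IsScalarTower K Λ (TensorMod K R Λ M) := by
  constructor
  intro k a x
  rw [tensorMod_lambda_smul, tensorMod_lambda_smul]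
  have h : Module.toModuleEnd K (RestrictScalars K Λ M) ((k • a : Λ))
      = k • Module.toModuleEnd K (RestrictScalars K Λ M) a := by
    ext m
    show (k • a) • m = k • (a • m)
    rw [smul_assoc]
  rw [h, LinearMap.lTensor_smul]
  rfl

instance : SMulCommClass R Λ (TensorMod K R Λ M) := by
  constructor
  intro r a x
  induction x using TensorProduct.induction_on with
  | zero => simp
  | tmul s m =>
      rw [tensorMod_lambda_smul, TensorProduct.smul_tmul', LinearMap.lTensor_tmul,
        tensorMod_lambda_smul, LinearMap.lTensor_tmul, TensorProduct.smul_tmul']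
  | add x y hx hy =>
      rw [smul_add, smul_add, hx, hy, ← smul_add, ← smul_add]

noncomputable instance tensorModModule : Module (R ⊗[K] Λ) (TensorMod K R Λ M) :=
  TensorProduct.Algebra.module

end TensorMod

section TensorFunctor
variable (K R Λ : Type) [Field K] [Ring R] [Algebra K R] [Ring Λ] [Algebra K Λ]

/-- A `Λ`-linear map `f : M → N`, viewed as a `K`-linear map. -/
noncomputable def restrictMap {M N : Type} [AddCommGroup M] [Module Λ M]
    [AddCommGroup N] [Module Λ N] (f : M →ₗ[Λ] N) :
    RestrictScalars K Λ M →ₗ[K] RestrictScalars K Λ N where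
  toFun m := f m
  map_add' x y := by exact f.map_add x y
  map_smul' k x := by
    show f ((algebraMap K Λ k) • _) = (algebraMap K Λ k) • f _
    exact f.map_smul _ _

/-- The map `R ⊗ f : R ⊗ M → R ⊗ N` induced by a `Λ`-linear map `f`, as an
`(R ⊗[K] Λ)`-linear map. -/
noncomputable def tensorModMap {M N : Type} [AddCommGroup M] [Module Λ M]
    [AddCommGroup N] [Module Λ N] (f : M →ₗ[Λ] N) :
    TensorMod K R Λ M →ₗ[R ⊗[K] Λ] TensorMod K R Λ N where
  toFun := LinearMap.lTensor R (restrictMap K Λ f)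
  map_add' x y := by simp
  map_smul' s x := by
    dsimp only [RingHom.id_apply]
    induction s using TensorProduct.induction_on with
    | zero => rw [zero_smul, zero_smul, map_zero]
    | add s t hs ht => rw [add_smul, add_smul, map_add, hs, ht]
    | tmul r a =>
        rw [TensorProduct.Algebra.smul_def, TensorProduct.Algebra.smul_def]
        induction x using TensorProduct.induction_on with
        | zero => simp
        | add x y hx hy => rw [smul_add, smul_add, map_add, map_add, hx, hy, smul_add, smul_add]
        | tmul u m =>
            rw [tensorMod_lambda_smul, LinearMap.lTensor_tmul, TensorProduct.smul_tmul',
              LinearMap.lTensor_tmul, LinearMap.lTensor_tmul, tensorMod_lambda_smul,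
              LinearMap.lTensor_tmul, TensorProduct.smul_tmul']
            show (r • u) ⊗ₜ[K] (restrictMap K Λ f (a • m)) = (r • u) ⊗ₜ[K] (a • restrictMap K Λ f m)
            congr 1
            show f (a • m) = a • f m
            exact f.map_smul _ _

lemma restrictMap_id {M : Type} [AddCommGroup M] [Module Λ M] :
    restrictMap K Λ (LinearMap.id : M →ₗ[Λ] M) = LinearMap.id := by
  ext x; rfl

lemma restrictMap_comp {M N P : Type} [AddCommGroup M] [Module Λ M] [AddCommGroup N]
    [Module Λ N] [AddCommGroup P] [Module Λ P] (f : M →ₗ[Λ] N) (g : N →ₗ[Λ] P) :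
    restrictMap K Λ (g ∘ₗ f) = restrictMap K Λ g ∘ₗ restrictMap K Λ f := by
  ext x; rfl

/-- The base change functor `- ⊗_K R : mod Λ → mod (R ⊗_K Λ)` (tensoring over `K` with
`R`). -/
noncomputable def tensorFunctor : ModuleCat.{0} Λ ⥤ ModuleCat.{0} (R ⊗[K] Λ) where
  obj M := ModuleCat.of _ (TensorMod K R Λ M)
  map {M N} f := ModuleCat.ofHom
    (tensorModMap K R Λ f.hom : TensorMod K R Λ M →ₗ[R ⊗[K] Λ] TensorMod K R Λ N)
  map_id M := by
    apply ModuleCat.hom_ext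
    apply LinearMap.ext
    intro x
    show LinearMap.lTensor R (restrictMap K Λ (𝟙 M : M ⟶ M).hom) x = x
    rw [show ((𝟙 M : M ⟶ M).hom : _ →ₗ[Λ] _) = LinearMap.id from rfl, restrictMap_id,
      LinearMap.lTensor_id]
    rfl
  map_comp {M N P} f g := by
    apply ModuleCat.hom_ext
    apply LinearMap.ext
    intro x
    show LinearMap.lTensor R (restrictMap K Λ (f ≫ g).hom) x = _
    rw [show ((f ≫ g : M ⟶ P).hom : _ →ₗ[Λ] _) = (g.hom : _ →ₗ[Λ] _) ∘ₗ (f.hom : _ →ₗ[Λ] _)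
      from rfl, restrictMap_comp, LinearMap.lTensor_comp]
    rfl

noncomputable instance : (tensorFunctor K R Λ).Additive where
  map_add := by
    intro M N f g
    apply ModuleCat.hom_ext
    apply LinearMap.ext
    intro x
    show LinearMap.lTensor R (restrictMap K Λ (f + g).hom) x = _
    have h : restrictMap K Λ (f + g).hom = restrictMap K Λ f.hom + restrictMap K Λ g.hom := by
      ext; rfl
    rw [h, LinearMap.lTensor_add]
    rfl
end TensorFunctor

section S2
variable (K R Λ : Type) [Field K] [CommRing R] [Algebra K R] [Ring Λ] [Algebra K Λ]
variable [FiniteDimensional K R] [FiniteDimensional K Λ]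

namespace LeftApproxAux

/-- Restriction of scalars along `Λ → R ⊗[K] Λ`. -/
noncomputable abbrev res : ModuleCat.{0} (R ⊗[K] Λ) ⥤ ModuleCat.{0} Λ :=
  ModuleCat.restrictScalars
    ((Algebra.TensorProduct.includeRight : Λ →ₐ[K] R ⊗[K] Λ).toRingHom)

instance : (res K R Λ).Additive where
  map_add := ModuleCat.hom_ext (LinearMap.ext fun _ => rfl)

lemma tmul_smul_tensorMod {M : Type} [AddCommGroup M] [Module Λ M] (r : R) (a : Λ)
    (x : TensorMod K R Λ M) :
    (r ⊗ₜ[K] a : R ⊗[K] Λ) • x = r • (a • x) := rfl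

lemma res_smul {M : ModuleCat.{0} Λ} (a : Λ)
    (x : (res K R Λ).obj ((tensorFunctor K R Λ).obj M)) :
    a • x = a • (show TensorMod K R Λ M from x) := by
  show ((Algebra.TensorProduct.includeRight : Λ →ₐ[K] R ⊗[K] Λ) a)
      • (show TensorMod K R Λ M from x) = _
  rw [Algebra.TensorProduct.includeRight_apply, tmul_smul_tensorMod, one_smul]

/-- The `Λ`-linear map `M → R ⊗ M`, `m ↦ r ⊗ m`. -/
noncomputable def incl (r : R) (M : ModuleCat.{0} Λ) :
    M ⟶ (res K R Λ).obj ((tensorFunctor K R Λ).obj M) := ModuleCat.ofHom (X := M)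
  (Y := (res K R Λ).obj ((tensorFunctor K R Λ).obj M)) {
  toFun := fun m => (r ⊗ₜ[K] (show RestrictScalars K Λ M from m) : TensorMod K R Λ M)
  map_add' := fun x y => TensorProduct.tmul_add (N := RestrictScalars K Λ M) r x y
  map_smul' := fun a m => by
    dsimp only [RingHom.id_apply]
    erw [res_smul, tensorMod_lambda_smul, LinearMap.lTensor_tmul]
    rfl }

/-- The `Λ`-linear coordinate map `R ⊗ M → M` w.r.t. a basis of `R` over `K`. -/
noncomputable def proj (j : Fin (Module.finrank K R)) (M : ModuleCat.{0} Λ) :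
    (res K R Λ).obj ((tensorFunctor K R Λ).obj M) ⟶ M := ModuleCat.ofHom
  (X := (res K R Λ).obj ((tensorFunctor K R Λ).obj M)) (Y := M) {
  toFun := fun x => (TensorProduct.lift
      ((LinearMap.lsmul K (RestrictScalars K Λ M)).comp
        ((Module.finBasis K R).coord j)) x : RestrictScalars K Λ M)
  map_add' := fun x y => map_add _ x y
  map_smul' := fun a x => by
    dsimp only [RingHom.id_apply]
    erw [res_smul, tensorMod_lambda_smul]
    induction x using TensorProduct.induction_on with
    | zero => simp; exact (smul_zero a).symm
    | add x y hx hy => rw [map_add, map_add, map_add, hx, hy]; exact (smul_add _ _ _).symm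
    | tmul r m =>
        rw [LinearMap.lTensor_tmul]
        simp only [TensorProduct.lift.tmul, LinearMap.coe_comp, Function.comp_apply,
          LinearMap.lsmul_apply]
        show algebraMap K Λ (((Module.finBasis K R).coord j) r) • a • m
            = a • (algebraMap K Λ (((Module.finBasis K R).coord j) r) • m)
        rw [← mul_smul, ← mul_smul, Algebra.commutes] }

lemma sum_proj_incl (M : ModuleCat.{0} Λ) :
    (∑ j : Fin (Module.finrank K R),
      proj K R Λ j M ≫ incl K R Λ ((Module.finBasis K R) j) M)
      = 𝟙 ((res K R Λ).obj ((tensorFunctor K R Λ).obj M)) := by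
  apply ModuleCat.hom_ext
  apply LinearMap.ext
  intro x
  show _ = x
  induction x using TensorProduct.induction_on with
  | zero => exact map_zero _
  | add x y hx hy => erw [map_add]; rw [hx, hy]; rfl
  | tmul r m =>
      have key : ∀ j : Fin (Module.finrank K R),
          (proj K R Λ j M ≫ incl K R Λ ((Module.finBasis K R) j) M)
            (show ((res K R Λ).obj ((tensorFunctor K R Λ).obj M)) from
              (r ⊗ₜ[K] m : TensorMod K R Λ M))
          = ((Module.finBasis K R).repr r j • (Module.finBasis K R) j) ⊗ₜ[K] m := by
        intro j
        show ((Module.finBasis K R) j) ⊗ₜ[K]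
            ((((Module.finBasis K R).coord j) r : K) • m) = _
        rw [TensorProduct.tmul_smul, TensorProduct.smul_tmul']
        rfl
      calc _ = ∑ j : Fin (Module.finrank K R),
            ((Module.finBasis K R).repr r j • (Module.finBasis K R) j) ⊗ₜ[K] m := by
              rw [ModuleCat.hom_sum]
              exact (LinearMap.sum_apply Finset.univ
                (fun j => (proj K R Λ j M ≫ incl K R Λ ((Module.finBasis K R) j) M).hom) (show ((res K R Λ).obj ((tensorFunctor K R Λ).obj M)) from
                (r ⊗ₜ[K] m : TensorMod K R Λ M))).trans (Finset.sum_congr rfl (fun j _ => key j))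
        _ = _ := ?_
      rw [← TensorProduct.sum_tmul]
      congr 1
      exact ((Module.finBasis K R)).sum_repr r

lemma incl_naturality {M N : ModuleCat.{0} Λ} (r : R) (u : M ⟶ N) :
    incl K R Λ r M ≫ (res K R Λ).map ((tensorFunctor K R Λ).map u)
      = u ≫ incl K R Λ r N := by
  apply ModuleCat.hom_ext
  apply LinearMap.ext
  intro m
  show LinearMap.lTensor R (restrictMap K Λ u.hom)
      (r ⊗ₜ[K] (show RestrictScalars K Λ M from m)) = r ⊗ₜ[K] _
  rw [LinearMap.lTensor_tmul]
  rfl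

lemma proj_naturality {M N : ModuleCat.{0} Λ} (j : Fin (Module.finrank K R)) (u : M ⟶ N) :
    (res K R Λ).map ((tensorFunctor K R Λ).map u) ≫ proj K R Λ j N
      = proj K R Λ j M ≫ u := by
  apply ModuleCat.hom_ext
  apply LinearMap.ext
  intro x
  show (proj K R Λ j N) (LinearMap.lTensor R (restrictMap K Λ u.hom) x)
      = u ((proj K R Λ j M) x)
  induction x using TensorProduct.induction_on with
  | zero => erw [map_zero, map_zero]
  | add x y hx hy =>
      erw [map_add, map_add, map_add, hx, hy]
      exact (map_add _ _ _).symm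
  | tmul r m =>
      rw [LinearMap.lTensor_tmul]
      show algebraMap K Λ (((Module.finBasis K R).coord j) r) • u m
          = u (algebraMap K Λ (((Module.finBasis K R).coord j) r) • m)
      exact (u.hom.map_smul _ _).symm

/-- One direction of the extension/restriction of scalars adjunction. -/
noncomputable def adj {M : ModuleCat.{0} Λ} {W : ModuleCat.{0} (R ⊗[K] Λ)}
    (ψ : (tensorFunctor K R Λ).obj M ⟶ W) : M ⟶ (res K R Λ).obj W :=
  incl K R Λ 1 M ≫ (res K R Λ).map ψ

/-- Auxiliary additive map for `adjInv`. -/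
noncomputable def adjInvHomAux {M : ModuleCat.{0} Λ} {W : ModuleCat.{0} (R ⊗[K] Λ)}
    (χ : M ⟶ (res K R Λ).obj W) (r : R) : RestrictScalars K Λ M →+ W where
  toFun := fun (m : RestrictScalars K Λ M) => ((r ⊗ₜ[K] (1 : Λ) : R ⊗[K] Λ)) • (χ m : W)
  map_zero' := by
    show ((r ⊗ₜ[K] (1 : Λ) : R ⊗[K] Λ)) • (χ 0 : W) = 0
    rw [map_zero, smul_zero]
  map_add' := fun x y => by
    show ((r ⊗ₜ[K] (1 : Λ) : R ⊗[K] Λ)) • (χ (x + y) : W) = _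
    exact (congrArg (fun w : W => ((r ⊗ₜ[K] (1 : Λ) : R ⊗[K] Λ)) • w)
      (χ.hom.map_add x y)).trans (smul_add _ _ _)

lemma adjInvHomAux_apply {M : ModuleCat.{0} Λ} {W : ModuleCat.{0} (R ⊗[K] Λ)}
    (χ : M ⟶ (res K R Λ).obj W) (r : R) (m : RestrictScalars K Λ M) :
    adjInvHomAux K R Λ χ r m = ((r ⊗ₜ[K] (1 : Λ) : R ⊗[K] Λ)) • (χ m : W) :=
  rfl

/-- The underlying additive map of `adjInv`. -/
noncomputable def adjInvHom {M : ModuleCat.{0} Λ} {W : ModuleCat.{0} (R ⊗[K] Λ)}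
    (χ : M ⟶ (res K R Λ).obj W) : TensorMod K R Λ M →+ W :=
  TensorProduct.liftAddHom
    { toFun := adjInvHomAux K R Λ χ
      map_zero' := by
        apply AddMonoidHom.ext
        intro (m : RestrictScalars K Λ M)
        rw [adjInvHomAux_apply]
        show ((0 : R) ⊗ₜ[K] (1 : Λ) : R ⊗[K] Λ) • (χ m : W) = 0
        rw [TensorProduct.zero_tmul, zero_smul]
      map_add' := fun r s => by
        apply AddMonoidHom.ext
        intro (m : RestrictScalars K Λ M)
        rw [AddMonoidHom.add_apply, adjInvHomAux_apply, adjInvHomAux_apply, adjInvHomAux_apply,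
          TensorProduct.add_tmul, add_smul]
        rfl }
    (fun k r m => by
      show adjInvHomAux K R Λ χ (k • r) m = adjInvHomAux K R Λ χ r (k • m)
      rw [adjInvHomAux_apply, adjInvHomAux_apply]
      show (((k • r) ⊗ₜ[K] (1 : Λ)) : R ⊗[K] Λ) • (χ m : W)
          = ((r ⊗ₜ[K] (1 : Λ)) : R ⊗[K] Λ) • (χ (k • m : RestrictScalars K Λ M) : W)
      have hm : (k • m : RestrictScalars K Λ M) = algebraMap K Λ k • m := rfl
      have h1 : (χ (k • m : RestrictScalars K Λ M) : W)
          = ((1 : R) ⊗ₜ[K] algebraMap K Λ k : R ⊗[K] Λ) • (χ m : W) := by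
        rw [hm]
        exact χ.hom.map_smul _ _
      rw [h1, ← mul_smul, Algebra.TensorProduct.tmul_mul_tmul, mul_one, one_mul]
      congr 1
      rw [TensorProduct.smul_tmul, Algebra.algebraMap_eq_smul_one])

lemma adjInvHom_tmul {M : ModuleCat.{0} Λ} {W : ModuleCat.{0} (R ⊗[K] Λ)}
    (χ : M ⟶ (res K R Λ).obj W) (r : R) (m : RestrictScalars K Λ M) :
    adjInvHom K R Λ χ ((r ⊗ₜ[K] m : TensorMod K R Λ M))
      = ((r ⊗ₜ[K] (1 : Λ)) : R ⊗[K] Λ) • (χ m : W) :=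
  TensorProduct.liftAddHom_tmul _ _ _ _

/-- The other direction of the extension/restriction of scalars adjunction. -/
noncomputable def adjInv {M : ModuleCat.{0} Λ} {W : ModuleCat.{0} (R ⊗[K] Λ)}
    (χ : M ⟶ (res K R Λ).obj W) : (tensorFunctor K R Λ).obj M ⟶ W := ModuleCat.ofHom
  (X := (tensorFunctor K R Λ).obj M) (Y := W) {
  toFun := adjInvHom K R Λ χ
  map_add' := fun x y => map_add _ x y
  map_smul' := fun s x => by
    dsimp only [RingHom.id_apply]
    induction s using TensorProduct.induction_on with
    | zero => erw [zero_smul, zero_smul, map_zero]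
    | add s t hs ht => erw [add_smul, add_smul, map_add, hs, ht]
    | tmul r' a =>
        induction x using TensorProduct.induction_on with
        | zero =>
            show adjInvHom K R Λ χ ((r' ⊗ₜ[K] a : R ⊗[K] Λ) • (0 : TensorMod K R Λ M))
              = (r' ⊗ₜ[K] a : R ⊗[K] Λ) • adjInvHom K R Λ χ 0
            rw [smul_zero, map_zero, smul_zero]
        | add x y hx hy => erw [smul_add, map_add, map_add, hx, hy, smul_add]
        | tmul r m =>
            have h1 : ((r' ⊗ₜ[K] a : R ⊗[K] Λ)) • (r ⊗ₜ[K] m : TensorMod K R Λ M)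
                = (r' * r) ⊗ₜ[K] (a • m : RestrictScalars K Λ M) := by
              rw [tmul_smul_tensorMod, tensorMod_lambda_smul, LinearMap.lTensor_tmul,
                TensorProduct.smul_tmul', smul_eq_mul]
              rfl
            erw [h1, adjInvHom_tmul, adjInvHom_tmul]
            have h2 : (χ (a • m : RestrictScalars K Λ M) : W)
                = ((1 : R) ⊗ₜ[K] a : R ⊗[K] Λ) • (χ m : W) := by
              exact χ.hom.map_smul _ _
            erw [h2, ← mul_smul]
            refine Eq.trans ?_
              (mul_smul (r' ⊗ₜ[K] a : R ⊗[K] Λ) (r ⊗ₜ[K] (1 : Λ)) (χ.hom m : W))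
            rw [Algebra.TensorProduct.tmul_mul_tmul,
              Algebra.TensorProduct.tmul_mul_tmul]
            simp only [mul_one, one_mul]
            rfl }

lemma adjInv_tmul {M : ModuleCat.{0} Λ} {W : ModuleCat.{0} (R ⊗[K] Λ)}
    (χ : M ⟶ (res K R Λ).obj W) (r : R) (m : RestrictScalars K Λ M) :
    adjInv K R Λ χ ((r ⊗ₜ[K] m : TensorMod K R Λ M))
      = ((r ⊗ₜ[K] (1 : Λ)) : R ⊗[K] Λ) • (χ m : W) :=
  adjInvHom_tmul K R Λ χ r m

lemma adjInv_adj {M : ModuleCat.{0} Λ} {W : ModuleCat.{0} (R ⊗[K] Λ)}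
    (ψ : (tensorFunctor K R Λ).obj M ⟶ W) : adjInv K R Λ (adj K R Λ ψ) = ψ := by
  apply ModuleCat.hom_ext
  apply LinearMap.ext
  intro x
  induction x using TensorProduct.induction_on with
  | zero => erw [map_zero, map_zero]
  | add x y hx hy => erw [map_add, map_add, hx, hy]
  | tmul r m =>
      rw [adjInv_tmul]
      show ((r ⊗ₜ[K] (1 : Λ)) : R ⊗[K] Λ) • ψ (((1 : R) ⊗ₜ[K] m : TensorMod K R Λ M)) = _
      erw [← map_smul, tmul_smul_tensorMod, one_smul, TensorProduct.smul_tmul', smul_eq_mul,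
        mul_one]

lemma adj_adjInv {M : ModuleCat.{0} Λ} {W : ModuleCat.{0} (R ⊗[K] Λ)}
    (χ : M ⟶ (res K R Λ).obj W) : adj K R Λ (adjInv K R Λ χ) = χ := by
  apply ModuleCat.hom_ext
  apply LinearMap.ext
  intro m
  show (adjInv K R Λ χ) (((1 : R) ⊗ₜ[K] m : TensorMod K R Λ M)) = χ m
  erw [adjInv_tmul]
  show ((1 : R ⊗[K] Λ)) • (χ m : W) = _
  rw [one_smul]

lemma adjInv_comp_left {M' M : ModuleCat.{0} Λ} {W : ModuleCat.{0} (R ⊗[K] Λ)}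
    (u : M' ⟶ M) (χ : M ⟶ (res K R Λ).obj W) :
    adjInv K R Λ (u ≫ χ) = (tensorFunctor K R Λ).map u ≫ adjInv K R Λ χ := by
  apply ModuleCat.hom_ext
  apply LinearMap.ext
  intro x
  induction x using TensorProduct.induction_on with
  | zero => erw [map_zero]
  | add x y hx hy =>
      show adjInv K R Λ (u ≫ χ) (x + y)
        = adjInv K R Λ χ (LinearMap.lTensor R (restrictMap K Λ u.hom) (x + y))
      erw [map_add, map_add, map_add, hx, hy]
      rfl
  | tmul r m =>
      show _ = (adjInv K R Λ χ) (LinearMap.lTensor R (restrictMap K Λ u.hom)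
        ((r ⊗ₜ[K] m : TensorMod K R Λ M')))
      rw [adjInv_tmul, LinearMap.lTensor_tmul, adjInv_tmul]
      rfl

lemma adjInv_comp_right {M : ModuleCat.{0} Λ} {W W' : ModuleCat.{0} (R ⊗[K] Λ)}
    (χ : M ⟶ (res K R Λ).obj W) (w : W ⟶ W') :
    adjInv K R Λ (χ ≫ (res K R Λ).map w) = adjInv K R Λ χ ≫ w := by
  apply ModuleCat.hom_ext
  apply LinearMap.ext
  intro x
  induction x using TensorProduct.induction_on with
  | zero => erw [map_zero]; exact (map_zero _).symm
  | add x y hx hy =>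
      show _ = w (adjInv K R Λ χ (x + y))
      erw [map_add, map_add, hx, hy]
      show _ = w (adjInv K R Λ χ x + adjInv K R Λ χ y)
      rw [map_add]
      rfl
  | tmul r m =>
      show _ = w ((adjInv K R Λ χ) ((r ⊗ₜ[K] m : TensorMod K R Λ M)))
      rw [adjInv_tmul, adjInv_tmul]
      exact (w.hom.map_smul _ _).symm

lemma adj_add {M : ModuleCat.{0} Λ} {W : ModuleCat.{0} (R ⊗[K] Λ)}
    (ψ ψ' : (tensorFunctor K R Λ).obj M ⟶ W) :
    adj K R Λ (ψ + ψ') = adj K R Λ ψ + adj K R Λ ψ' := by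
  unfold adj
  rw [Functor.map_add, Preadditive.comp_add]

lemma adj_zero {M : ModuleCat.{0} Λ} {W : ModuleCat.{0} (R ⊗[K] Λ)} :
    adj K R Λ (0 : (tensorFunctor K R Λ).obj M ⟶ W) = 0 := by
  unfold adj
  rw [Functor.map_zero, Limits.comp_zero]

lemma adjInv_add {M : ModuleCat.{0} Λ} {W : ModuleCat.{0} (R ⊗[K] Λ)}
    (χ χ' : M ⟶ (res K R Λ).obj W) :
    adjInv K R Λ (χ + χ') = adjInv K R Λ χ + adjInv K R Λ χ' := by
  have h : adj K R Λ (adjInv K R Λ χ + adjInv K R Λ χ') = χ + χ' := by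
    rw [adj_add, adj_adjInv, adj_adjInv]
  rw [← h, adjInv_adj]

lemma adjInv_zero {M : ModuleCat.{0} Λ} {W : ModuleCat.{0} (R ⊗[K] Λ)} :
    adjInv K R Λ (0 : M ⟶ (res K R Λ).obj W) = 0 := by
  have h : adj K R Λ (0 : (tensorFunctor K R Λ).obj M ⟶ W) = 0 := adj_zero K R Λ
  rw [← h, adjInv_adj]

lemma adj_comp_left {M' M : ModuleCat.{0} Λ} {W : ModuleCat.{0} (R ⊗[K] Λ)}
    (u : M' ⟶ M) (ψ : (tensorFunctor K R Λ).obj M ⟶ W) :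
    adj K R Λ ((tensorFunctor K R Λ).map u ≫ ψ) = u ≫ adj K R Λ ψ := by
  unfold adj
  rw [Functor.map_comp, ← Category.assoc, incl_naturality, Category.assoc]

lemma adj_comp_right {M : ModuleCat.{0} Λ} {W W' : ModuleCat.{0} (R ⊗[K] Λ)}
    (ψ : (tensorFunctor K R Λ).obj M ⟶ W) (w : W ⟶ W') :
    adj K R Λ (ψ ≫ w) = adj K R Λ ψ ≫ (res K R Λ).map w := by
  unfold adj
  rw [Functor.map_comp, Category.assoc]

/-- The chain-level version of `adj`. -/
noncomputable def Phi {A B : CochainComplex (ModuleCat.{0} Λ) ℤ}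
    (Ψ : ((tensorFunctor K R Λ).mapHomologicalComplex (ComplexShape.up ℤ)).obj A ⟶
         ((tensorFunctor K R Λ).mapHomologicalComplex (ComplexShape.up ℤ)).obj B) :
    A ⟶ ((res K R Λ).mapHomologicalComplex (ComplexShape.up ℤ)).obj
        (((tensorFunctor K R Λ).mapHomologicalComplex (ComplexShape.up ℤ)).obj B) where
  f i := adj K R Λ (Ψ.f i)
  comm' i i' _ := by
    show adj K R Λ (Ψ.f i) ≫ (res K R Λ).map ((tensorFunctor K R Λ).map (B.d i i'))
        = A.d i i' ≫ adj K R Λ (Ψ.f i')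
    erw [← adj_comp_right]
    have h : Ψ.f i ≫ (tensorFunctor K R Λ).map (B.d i i')
        = (tensorFunctor K R Λ).map (A.d i i') ≫ Ψ.f i' := Ψ.comm i i'
    erw [h, adj_comp_left]
    rfl

/-- The chain-level version of `adjInv`. -/
noncomputable def PhiInv {A B : CochainComplex (ModuleCat.{0} Λ) ℤ}
    (χ : A ⟶ ((res K R Λ).mapHomologicalComplex (ComplexShape.up ℤ)).obj
        (((tensorFunctor K R Λ).mapHomologicalComplex (ComplexShape.up ℤ)).obj B)) :
    ((tensorFunctor K R Λ).mapHomologicalComplex (ComplexShape.up ℤ)).obj A ⟶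
      ((tensorFunctor K R Λ).mapHomologicalComplex (ComplexShape.up ℤ)).obj B where
  f i := adjInv K R Λ (χ.f i)
  comm' i i' _ := by
    show adjInv K R Λ (χ.f i) ≫ (tensorFunctor K R Λ).map (B.d i i')
        = (tensorFunctor K R Λ).map (A.d i i') ≫ adjInv K R Λ (χ.f i')
    erw [← adjInv_comp_right, ← adjInv_comp_left]
    congr 1
    exact χ.comm i i'

lemma PhiInv_Phi {A B : CochainComplex (ModuleCat.{0} Λ) ℤ}
    (Ψ : ((tensorFunctor K R Λ).mapHomologicalComplex (ComplexShape.up ℤ)).obj A ⟶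
         ((tensorFunctor K R Λ).mapHomologicalComplex (ComplexShape.up ℤ)).obj B) :
    PhiInv K R Λ (Phi K R Λ Ψ) = Ψ := by
  apply HomologicalComplex.hom_ext
  intro i
  exact adjInv_adj K R Λ (Ψ.f i)

lemma PhiInv_comp {A' A B : CochainComplex (ModuleCat.{0} Λ) ℤ} (u : A' ⟶ A)
    (χ : A ⟶ ((res K R Λ).mapHomologicalComplex (ComplexShape.up ℤ)).obj
        (((tensorFunctor K R Λ).mapHomologicalComplex (ComplexShape.up ℤ)).obj B)) :
    PhiInv K R Λ (u ≫ χ)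
      = ((tensorFunctor K R Λ).mapHomologicalComplex (ComplexShape.up ℤ)).map u
          ≫ PhiInv K R Λ χ := by
  apply HomologicalComplex.hom_ext
  intro i
  show adjInv K R Λ ((u ≫ χ).f i) = _
  erw [HomologicalComplex.comp_f, adjInv_comp_left]
  rfl

/-- Transferring homotopies along `PhiInv`. -/
noncomputable def PhiInvHomotopy {A B : CochainComplex (ModuleCat.{0} Λ) ℤ}
    {χ χ' : A ⟶ ((res K R Λ).mapHomologicalComplex (ComplexShape.up ℤ)).obj
        (((tensorFunctor K R Λ).mapHomologicalComplex (ComplexShape.up ℤ)).obj B)}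
    (H : Homotopy χ χ') : Homotopy (PhiInv K R Λ χ) (PhiInv K R Λ χ') where
  hom i j := adjInv K R Λ (H.hom i j)
  zero i j h := by
    show adjInv K R Λ (H.hom i j) = 0
    erw [H.zero i j h, adjInv_zero]
  comm i := by
    have h1 : (ComplexShape.up ℤ).Rel i (i + 1) := rfl
    have h2 : (ComplexShape.up ℤ).Rel (i - 1) i := by simp
    have hc := H.comm i
    rw [dNext_eq _ h1, prevD_eq _ h2] at hc
    erw [dNext_eq _ h1, prevD_eq _ h2]
    show adjInv K R Λ (χ.f i) = _
    rw [hc]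
    refine (adjInv_add K R Λ _ _).trans ?_
    refine (congrArg₂ (· + ·) (adjInv_add K R Λ _ _) rfl).trans ?_
    have e1 : adjInv K R Λ (A.d i (i + 1) ≫ H.hom (i + 1) i)
        = (tensorFunctor K R Λ).map (A.d i (i + 1)) ≫ adjInv K R Λ (H.hom (i + 1) i) :=
      adjInv_comp_left K R Λ _ _
    have e2 : adjInv K R Λ (H.hom i (i - 1)
          ≫ (((res K R Λ).mapHomologicalComplex (ComplexShape.up ℤ)).obj
            (((tensorFunctor K R Λ).mapHomologicalComplex (ComplexShape.up ℤ)).obj B)).d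
              (i - 1) i)
        = adjInv K R Λ (H.hom i (i - 1)) ≫ (tensorFunctor K R Λ).map (B.d (i - 1) i) :=
      adjInv_comp_right K R Λ _ _
    exact congrArg₂ (· + ·) (congrArg₂ (· + ·) e1 e2) rfl

/-- Chain-level coordinate projection. -/
noncomputable def projC (j : Fin (Module.finrank K R)) (B : CochainComplex (ModuleCat.{0} Λ) ℤ) :
    ((res K R Λ).mapHomologicalComplex (ComplexShape.up ℤ)).obj
        (((tensorFunctor K R Λ).mapHomologicalComplex (ComplexShape.up ℤ)).obj B) ⟶ B where
  f i := proj K R Λ j (B.X i)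
  comm' i i' _ := (proj_naturality K R Λ j (B.d i i')).symm

/-- Chain-level inclusion. -/
noncomputable def inclC (r : R) (B : CochainComplex (ModuleCat.{0} Λ) ℤ) :
    B ⟶ ((res K R Λ).mapHomologicalComplex (ComplexShape.up ℤ)).obj
        (((tensorFunctor K R Λ).mapHomologicalComplex (ComplexShape.up ℤ)).obj B) where
  f i := incl K R Λ r (B.X i)
  comm' i i' _ := incl_naturality K R Λ r (B.d i i')

lemma sum_projC_inclC (B : CochainComplex (ModuleCat.{0} Λ) ℤ) :
    (∑ j : Fin (Module.finrank K R),
        projC K R Λ j B ≫ inclC K R Λ ((Module.finBasis K R) j) B)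
      = 𝟙 (((res K R Λ).mapHomologicalComplex (ComplexShape.up ℤ)).obj
          (((tensorFunctor K R Λ).mapHomologicalComplex (ComplexShape.up ℤ)).obj B)) := by
  apply HomologicalComplex.hom_ext
  intro i
  rw [show (∑ j : Fin (Module.finrank K R),
        projC K R Λ j B ≫ inclC K R Λ ((Module.finBasis K R) j) B).f i
      = ∑ j : Fin (Module.finrank K R),
        (projC K R Λ j B ≫ inclC K R Λ ((Module.finBasis K R) j) B).f i from
    map_sum (HomologicalComplex.Hom.fAddMonoidHom i) _ _]
  have : ∀ j : Fin (Module.finrank K R),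
      (projC K R Λ j B ≫ inclC K R Λ ((Module.finBasis K R) j) B).f i
        = proj K R Λ j (B.X i) ≫ incl K R Λ ((Module.finBasis K R) j) (B.X i) := fun j => rfl
  erw [Finset.sum_congr rfl (fun j _ => this j), sum_proj_incl]
  rfl

end LeftApproxAux

/-- if `f : X → Y` is a left `𝒴`-approximation in `K^b(proj Λ)` (for a full
subcategory `𝒴`, given by a set of bounded complexes of finitely generated projective
modules), then `f ⊗_K R` is a left `𝒴 ⊗_K R`-approximation in `K^b(proj (R ⊗_K Λ))`. -/
theorem leftApproximation_tensor
    (𝒴 : Set (CochainComplex (ModuleCat.{0} Λ) ℤ))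
    (h𝒴 : ∀ Z ∈ 𝒴, (∀ i, CategoryTheory.Projective (Z.X i)) ∧
      (∀ i, Module.Finite Λ (Z.X i)) ∧ ∃ a b : ℤ, ∀ i, (i < a ∨ b < i) → Subsingleton (Z.X i))
    (X : CochainComplex (ModuleCat.{0} Λ) ℤ)
    (hXproj : ∀ i, CategoryTheory.Projective (X.X i))
    (hXfin : ∀ i, Module.Finite Λ (X.X i))
    (hXbdd : ∃ a b : ℤ, ∀ i, (i < a ∨ b < i) → Subsingleton (X.X i))
    (Y : CochainComplex (ModuleCat.{0} Λ) ℤ) (hY : Y ∈ 𝒴)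
    (f : (HomotopyCategory.quotient (ModuleCat.{0} Λ) (ComplexShape.up ℤ)).obj X ⟶
         (HomotopyCategory.quotient (ModuleCat.{0} Λ) (ComplexShape.up ℤ)).obj Y)
    (happrox : ∀ Z ∈ 𝒴,
      ∀ g : (HomotopyCategory.quotient (ModuleCat.{0} Λ) (ComplexShape.up ℤ)).obj X ⟶
            (HomotopyCategory.quotient (ModuleCat.{0} Λ) (ComplexShape.up ℤ)).obj Z,
        ∃ h, f ≫ h = g) :
    ∀ Z ∈ 𝒴,
      ∀ g : ((tensorFunctor K R Λ).mapHomotopyCategory (ComplexShape.up ℤ)).obj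
              ((HomotopyCategory.quotient (ModuleCat.{0} Λ) (ComplexShape.up ℤ)).obj X) ⟶
            ((tensorFunctor K R Λ).mapHomotopyCategory (ComplexShape.up ℤ)).obj
              ((HomotopyCategory.quotient (ModuleCat.{0} Λ) (ComplexShape.up ℤ)).obj Z),
        ∃ h : ((tensorFunctor K R Λ).mapHomotopyCategory (ComplexShape.up ℤ)).obj
                ((HomotopyCategory.quotient (ModuleCat.{0} Λ) (ComplexShape.up ℤ)).obj Y) ⟶
              ((tensorFunctor K R Λ).mapHomotopyCategory (ComplexShape.up ℤ)).obj
                ((HomotopyCategory.quotient (ModuleCat.{0} Λ) (ComplexShape.up ℤ)).obj Z),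
          ((tensorFunctor K R Λ).mapHomotopyCategory (ComplexShape.up ℤ)).map f ≫ h = g := by
  intro Z hZ g
  classical
  obtain ⟨g₀, hg₀⟩ := (HomotopyCategory.quotient (ModuleCat.{0} (R ⊗[K] Λ))
    (ComplexShape.up ℤ)).map_surjective
    (show (HomotopyCategory.quotient (ModuleCat.{0} (R ⊗[K] Λ)) (ComplexShape.up ℤ)).obj
        (((tensorFunctor K R Λ).mapHomologicalComplex (ComplexShape.up ℤ)).obj X) ⟶
      (HomotopyCategory.quotient (ModuleCat.{0} (R ⊗[K] Λ)) (ComplexShape.up ℤ)).obj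
        (((tensorFunctor K R Λ).mapHomologicalComplex (ComplexShape.up ℤ)).obj Z) from g)
  obtain ⟨f₀, hf₀⟩ := (HomotopyCategory.quotient (ModuleCat.{0} Λ)
    (ComplexShape.up ℤ)).map_surjective f
  have comp : ∀ j : Fin (Module.finrank K R), ∃ h, f ≫ h =
      (HomotopyCategory.quotient (ModuleCat.{0} Λ) (ComplexShape.up ℤ)).map
          (LeftApproxAux.Phi K R Λ g₀)
        ≫ (HomotopyCategory.quotient (ModuleCat.{0} Λ) (ComplexShape.up ℤ)).map
          (LeftApproxAux.projC K R Λ j Z) :=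
    fun j => happrox Z hZ _
  choose hj hhj using comp
  set hG := ∑ j : Fin (Module.finrank K R), hj j
      ≫ (HomotopyCategory.quotient (ModuleCat.{0} Λ) (ComplexShape.up ℤ)).map
        (LeftApproxAux.inclC K R Λ ((Module.finBasis K R) j) Z) with hGdef
  have hfhG : f ≫ hG = (HomotopyCategory.quotient (ModuleCat.{0} Λ) (ComplexShape.up ℤ)).map
      (LeftApproxAux.Phi K R Λ g₀) := by
    rw [hGdef, Preadditive.comp_sum]
    have step : ∀ j : Fin (Module.finrank K R),
        f ≫ (hj j ≫ (HomotopyCategory.quotient (ModuleCat.{0} Λ) (ComplexShape.up ℤ)).map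
            (LeftApproxAux.inclC K R Λ ((Module.finBasis K R) j) Z))
          = (HomotopyCategory.quotient (ModuleCat.{0} Λ) (ComplexShape.up ℤ)).map
              (LeftApproxAux.Phi K R Λ g₀)
            ≫ (HomotopyCategory.quotient (ModuleCat.{0} Λ) (ComplexShape.up ℤ)).map
              (LeftApproxAux.projC K R Λ j Z
                ≫ LeftApproxAux.inclC K R Λ ((Module.finBasis K R) j) Z) := by
      intro j
      rw [← Category.assoc, hhj j, Category.assoc, ← Functor.map_comp]
    rw [Finset.sum_congr rfl (fun j _ => step j), ← Preadditive.comp_sum, ← Functor.map_sum,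
      LeftApproxAux.sum_projC_inclC, CategoryTheory.Functor.map_id, Category.comp_id]
  obtain ⟨H', hH'⟩ := (HomotopyCategory.quotient (ModuleCat.{0} Λ)
    (ComplexShape.up ℤ)).map_surjective hG
  have heq : (HomotopyCategory.quotient (ModuleCat.{0} Λ) (ComplexShape.up ℤ)).map (f₀ ≫ H')
      = (HomotopyCategory.quotient (ModuleCat.{0} Λ) (ComplexShape.up ℤ)).map
        (LeftApproxAux.Phi K R Λ g₀) := by
    rw [Functor.map_comp, hf₀, hH', hfhG]
  have hty := LeftApproxAux.PhiInvHomotopy K R Λ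
    (HomotopyCategory.homotopyOfEq _ _ heq)
  rw [LeftApproxAux.PhiInv_comp, LeftApproxAux.PhiInv_Phi] at hty
  refine ⟨(HomotopyCategory.quotient (ModuleCat.{0} (R ⊗[K] Λ)) (ComplexShape.up ℤ)).map
    (LeftApproxAux.PhiInv K R Λ H'), ?_⟩
  have hg₀' : (HomotopyCategory.quotient (ModuleCat.{0} (R ⊗[K] Λ)) (ComplexShape.up ℤ)).map g₀
      = g := hg₀
  erw [← hf₀, Functor.mapHomotopyCategory_map, ← Functor.map_comp, ← hg₀']
  exact HomotopyCategory.eq_of_homotopy _ _ hty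

end S2
end
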